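/- Uniqueness of the zero fixed point (Lemma in Appendix, 'alphaglobal'): Suppose φ and ψ satisfy Assumption A, and let α ∈ (0,1) satisfy α > α1 := sup_{x>0} φ′(x)/(φ′(x)+1) and α > α2 := sup_{x>0} ψ′(x)/(ψ′(x)+1), so that the fixed-point functions Ψ₁ and Ψ₂ are well defined. If Ψ₁(Ψ₂(x)) < x for every x ∈ (0, sup_{u≥0} φ(u)), then (τ_S, τ_L) = (0, 0) is the only solution in [0,∞)×[0,∞) of the fixed-point system τ_S = φ((1/α − 1)·τ_S + (1/α)·τ_L), τ_L = ψ((1/α − 1)·τ_L + (1/α)·τ_S). -/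

import Mathlib

open Set

lemma my_deriv_nonneg (f : ℝ → ℝ) (hm : StrictMonoOn f (Set.Ici 0))
    (hd : DifferentiableOn ℝ f (Set.Ici 0)) {x : ℝ} (hx : 0 < x) :
    0 ≤ deriv f x := by
  have hda : DifferentiableAt ℝ f x := hd.differentiableAt (Ici_mem_nhds hx)
  have h := hda.hasDerivAt
  rw [hasDerivAt_iff_tendsto_slope] at h
  have h' : Filter.Tendsto (slope f x) (nhdsWithin x (Set.Ioi x)) (nhds (deriv f x)) :=
    h.mono_left (nhdsWithin_mono x (fun y hy => ne_of_gt hy))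
  refine ge_of_tendsto h' ?_
  filter_upwards [self_mem_nhdsWithin] with y hy
  have hxy : x < y := hy
  have hfle : f x ≤ f y :=
    (hm.monotoneOn) (le_of_lt hx) (le_of_lt (hx.trans hxy)) (le_of_lt hxy)
  rw [slope_def_field]
  exact div_nonneg (by linarith) (by linarith)

lemma my_key (f : ℝ → ℝ) (α : ℝ)
    (hc : ContinuousOn f (Set.Ici 0)) (hm : StrictMonoOn f (Set.Ici 0))
    (hd : DifferentiableOn ℝ f (Set.Ici 0)) (hα : α ∈ Set.Ioo (0:ℝ) 1)
    (hsup : sSup {y : ℝ | ∃ x > 0, y = deriv f x / (deriv f x + 1)} < α)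
    {a b : ℝ} (ha : 0 ≤ a) (hab : a < b) :
    f b - f a < α / (1 - α) * (b - a) := by
  obtain ⟨hα0, hα1⟩ := hα
  obtain ⟨c, hc1, hc2⟩ := exists_deriv_eq_slope f hab
    (hc.mono (fun x hx => le_trans ha hx.1))
    (fun x hx => (hd.differentiableAt (Ici_mem_nhds (lt_of_le_of_lt ha hx.1))).differentiableWithinAt)
  have hcpos : 0 < c := lt_of_le_of_lt ha hc1.1
  set d := deriv f c with hdef
  have hdnn : 0 ≤ d := my_deriv_nonneg f hm hd hcpos
  have hmem : d / (d + 1) ∈ {y : ℝ | ∃ x > 0, y = deriv f x / (deriv f x + 1)} :=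
    ⟨c, hcpos, rfl⟩
  have hbdd : BddAbove {y : ℝ | ∃ x > 0, y = deriv f x / (deriv f x + 1)} := by
    refine ⟨1, fun y hy => ?_⟩
    obtain ⟨x, hx, rfl⟩ := hy
    have h0 : 0 ≤ deriv f x := my_deriv_nonneg f hm hd hx
    rw [div_le_one (by linarith)]
    linarith
  have hlt : d / (d + 1) < α := lt_of_le_of_lt (le_csSup hbdd hmem) hsup
  have hd1 : 0 < d + 1 := by linarith
  have hdlt : d < α / (1 - α) := by
    rw [div_lt_iff₀ hd1] at hlt
    rw [lt_div_iff₀ (by linarith)]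
    nlinarith
  have hslope : f b - f a = d * (b - a) := by
    rw [hc2, div_mul_cancel₀]
    exact ne_of_gt (by linarith)
  rw [hslope]
  exact mul_lt_mul_of_pos_right hdlt (by linarith) |>.trans_le (le_of_eq rfl)

lemma my_uniq (f : ℝ → ℝ) (α : ℝ)
    (hc : ContinuousOn f (Set.Ici 0)) (hm : StrictMonoOn f (Set.Ici 0))
    (hd : DifferentiableOn ℝ f (Set.Ici 0)) (hα : α ∈ Set.Ioo (0:ℝ) 1)
    (hsup : sSup {y : ℝ | ∃ x > 0, y = deriv f x / (deriv f x + 1)} < α)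
    {m t1 t2 : ℝ} (hmm : 0 ≤ m) (h1 : 0 ≤ t1) (h2 : 0 ≤ t2)
    (e1 : f ((1/α - 1) * t1 + m) = t1) (e2 : f ((1/α - 1) * t2 + m) = t2) :
    t1 = t2 := by
  obtain ⟨hα0, hα1⟩ := hα
  have hcpos : 0 < 1/α - 1 := by
    rw [sub_pos, lt_div_iff₀ hα0]; linarith
  have main : ∀ s1 s2 : ℝ, 0 ≤ s1 → s1 < s2 →
      f ((1/α - 1) * s1 + m) = s1 → f ((1/α - 1) * s2 + m) = s2 → False := by
    intro s1 s2 hs1 hs12 f1 f2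
    have harg1 : 0 ≤ (1/α - 1) * s1 + m := by positivity
    have harg2 : (1/α - 1) * s1 + m < (1/α - 1) * s2 + m := by nlinarith
    have := my_key f α hc hm hd ⟨hα0, hα1⟩ hsup harg1 harg2
    rw [f1, f2] at this
    have heq : ((1/α - 1) * s2 + m) - ((1/α - 1) * s1 + m) = (1/α - 1) * (s2 - s1) := by ring
    rw [heq] at this
    have hfac : α / (1 - α) * ((1/α - 1) * (s2 - s1)) = s2 - s1 := by
      field_simp
    rw [hfac] at this
    linarith
  rcases lt_trichotomy t1 t2 with h | h | h
  · exact absurd (main t1 t2 h1 h e1 e2) (fun h => h.elim)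
  · exact h
  · exact absurd (main t2 t1 h2 h e2 e1) (fun h => h.elim)

theorem stmt6 (φ ψ : ℝ → ℝ) (α : ℝ) (Ψ₁ Ψ₂ : ℝ → ℝ)
    (hφnn : ∀ x ∈ Set.Ici (0:ℝ), 0 ≤ φ x)
    (hψnn : ∀ x ∈ Set.Ici (0:ℝ), 0 ≤ ψ x)
    (hφ0 : φ 0 = 0) (hψ0 : ψ 0 = 0)
    (hφc : ContinuousOn φ (Set.Ici 0)) (hψc : ContinuousOn ψ (Set.Ici 0))
    (hφm : StrictMonoOn φ (Set.Ici 0)) (hψm : StrictMonoOn ψ (Set.Ici 0))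
    (hφd : DifferentiableOn ℝ φ (Set.Ici 0)) (hψd : DifferentiableOn ℝ ψ (Set.Ici 0))
    (hφd' : ContinuousOn (deriv φ) (Set.Ici 0)) (hψd' : ContinuousOn (deriv ψ) (Set.Ici 0))
    (hα : α ∈ Set.Ioo (0:ℝ) 1)
    (hα1 : sSup {y : ℝ | ∃ x > 0, y = deriv φ x / (deriv φ x + 1)} < α)
    (hα2 : sSup {y : ℝ | ∃ x > 0, y = deriv ψ x / (deriv ψ x + 1)} < α)
    (hΨ₁0 : Ψ₁ 0 = 0)
    (hΨ₁ : ∀ y : ℝ, 0 < y →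
      0 < Ψ₁ y ∧ φ ((1/α - 1) * Ψ₁ y + (1/α) * y) = Ψ₁ y)
    (hΨ₂0 : Ψ₂ 0 = 0)
    (hΨ₂ : ∀ y : ℝ, 0 < y →
      0 < Ψ₂ y ∧ ψ ((1/α - 1) * Ψ₂ y + (1/α) * y) = Ψ₂ y)
    (hcontr : ∀ x : ℝ, 0 < x →
      ((x : EReal) < ⨆ u : Set.Ici (0:ℝ), (φ u.1 : EReal)) →
      Ψ₁ (Ψ₂ x) < x) :
    ∀ τS τL : ℝ, 0 ≤ τS → 0 ≤ τL →
      τS = φ ((1/α - 1) * τS + (1/α) * τL) →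
      τL = ψ ((1/α - 1) * τL + (1/α) * τS) →
      τS = 0 ∧ τL = 0 := by
  intro τS τL hS hL eS eL
  obtain ⟨hα0, hα1'⟩ := hα
  have hcpos : 0 < 1/α - 1 := by
    rw [sub_pos, lt_div_iff₀ hα0]; linarith
  have hαinv : 0 < 1/α := by positivity
  -- helper: a positive fixed point of f at m=0 is impossible
  have no_pos_self : ∀ (f : ℝ → ℝ), f 0 = 0 → ContinuousOn f (Set.Ici 0) →
      StrictMonoOn f (Set.Ici 0) → DifferentiableOn ℝ f (Set.Ici 0) →
      sSup {y : ℝ | ∃ x > 0, y = deriv f x / (deriv f x + 1)} < α →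
      ∀ t : ℝ, 0 ≤ t → t = f ((1/α - 1) * t + (1/α) * 0) → t = 0 := by
    intro f hf0 hfc hfm hfd hfs t ht he
    rcases eq_or_lt_of_le ht with h | h
    · exact h.symm
    · exfalso
      have e0 : f ((1/α - 1) * 0 + (1/α) * 0) = 0 := by
        norm_num [hf0]
      have et : f ((1/α - 1) * t + (1/α) * 0) = t := he.symm
      have := my_uniq f α hfc hfm hfd ⟨hα0, hα1'⟩ hfs
        (by positivity) (le_refl 0) ht e0 et
      linarith
  by_cases hS0 : τS = 0
  · subst hS0
    refine ⟨rfl, ?_⟩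
    exact no_pos_self ψ hψ0 hψc hψm hψd hα2 τL hL eL
  · exfalso
    have hSpos : 0 < τS := lt_of_le_of_ne hS (Ne.symm hS0)
    have hLpos : 0 < τL := by
      rcases eq_or_lt_of_le hL with h | h
      · exfalso
        have : τS = 0 := by
          apply no_pos_self φ hφ0 hφc hφm hφd hα1 τS hS
          rw [← h] at eS; exact eS
        exact hS0 this
      · exact h
    -- τL = Ψ₂ τS
    obtain ⟨hp2, he2⟩ := hΨ₂ τS hSpos
    have hL2 : τL = Ψ₂ τS :=
      my_uniq ψ α hψc hψm hψd ⟨hα0, hα1'⟩ hα2 (by positivity) hL (le_of_lt hp2) eL.symm he2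
    obtain ⟨hp1, he1⟩ := hΨ₁ τL hLpos
    have hS1 : τS = Ψ₁ τL :=
      my_uniq φ α hφc hφm hφd ⟨hα0, hα1'⟩ hα1 (by positivity) hS (le_of_lt hp1) eS.symm he1
    -- sup condition
    have harg : 0 < (1/α - 1) * τS + (1/α) * τL := by positivity
    have hsuplt : ((τS : EReal) < ⨆ u : Set.Ici (0:ℝ), (φ u.1 : EReal)) := by
      have hlt : τS < φ ((1/α - 1) * τS + (1/α) * τL + 1) := by
        nth_rewrite 1 [eS]
        exact hφm (Set.mem_Ici.mpr harg.le) (Set.mem_Ici.mpr (by positivity)) (by linarith)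
      calc (τS : EReal) < (φ ((1/α - 1) * τS + (1/α) * τL + 1) : EReal) := by
            exact_mod_cast hlt
        _ ≤ ⨆ u : Set.Ici (0:ℝ), (φ u.1 : EReal) :=
            le_iSup (fun u : Set.Ici (0:ℝ) => (φ u.1 : EReal))
              ⟨(1/α - 1) * τS + (1/α) * τL + 1, Set.mem_Ici.mpr (by positivity)⟩
    have := hcontr τS hSpos hsuplt
    rw [← hL2, ← hS1] at this
    exact lt_irrefl _ this
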